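/- Call a pair of domains (d_2, d_1) an elementary wall (at position ≡ 0 mod 4) if, writing d_1 = (a,b), d_2 is one of (a−1,b), (a+1,b), (a+1,b−1), (a−1,b+1), or d_1 = (0,b) and d_2 = (0,b+1), or d_1 = (m−n,b) and d_2 = (m−n,b−1). Then for any two domains (a_2,b_2) ≠ (a_1,b_1) there exists a unique finite sequence of domains (a_2,b_2) = d_K, d_{K−1}, …, d_0 = (a_1,b_1) such that every consecutive pair (d_{i+1}, d_i) is an elementary wall and, reading from left to right, the walls occur in the order: first walls of type (a+1,b)(a,b) or all of type (a−1,b)(a,b) (a single sign), then walls of a single boundary type ((0,b+1)(0,b) or (m−n,b−1)(m−n,b)), then walls of type (a+1,b−1)(a,b) or all of type (a−1,b+1)(a,b) (a single sign). Explicitly: if b_2 − b_1 > a_1, the walls are a_2 of type (a+1,b)(a,b), then b_2−b_1−a_1 of type (0,b+1)(0,b), then a_1 of type (a−1,b+1)(a,b); if a_2+b_2 ≥ a_1+b_1 ≥ b_2, they are a_2+b_2−a_1−b_1 of type (a+1,b)(a,b) followed by |b_2−b_1| walls of type (a−1,b+1)(a,b) if b_2 ≥ b_1 and of type (a+1,b−1)(a,b)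 if b_2 ≤ b_1; if m−n+b_2 ≥ a_1+b_1 ≥ a_2+b_2, they are a_1+b_1−a_2−b_2 of type (a−1,b)(a,b) followed by |b_2−b_1| walls of type (a−1,b+1)(a,b) if b_2 ≥ b_1 and of type (a+1,b−1)(a,b) if b_2 ≤ b_1; if b_1 − b_2 > m−n−a_1, they are m−n−a_2 of type (a−1,b)(a,b), then a_1+b_1−b_2−(m−n) of type (m−n,b−1)(m−n,b), then m−n−a_1 of type (a+1,b−1)(a,b). -/
import Mathlib


namespace Stmt14

/-- `(a,b)` is a domain. -/
def IsDomain (m n : ℤ) (d : ℤ × ℤ) : Prop :=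
  0 ≤ d.1 ∧ d.1 ≤ m - n ∧ 0 ≤ d.2 ∧ d.2 ≤ n

/-- The six types of elementary walls (at positions `≡ 0 (mod 4)`), named by how the left
domain `d₂` is obtained from the right domain `d₁ = (a,b)`:
`cm : (a-1,b)`, `cp : (a+1,b)`, `bp : (0,b+1)` (only at `a = 0`),
`tm : (m-n,b-1)` (only at `a = m-n`), `spm : (a+1,b-1)`, `smp : (a-1,b+1)`. -/
inductive WStep where
  | cm | cp | bp | tm | spm | smp
deriving DecidableEq

/-- The left domain of the elementary wall of type `w` whose right domain is `d`. -/
def applyW (d : ℤ × ℤ) : WStep → ℤ × ℤ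
  | .cm => (d.1 - 1, d.2)
  | .cp => (d.1 + 1, d.2)
  | .bp => (d.1, d.2 + 1)
  | .tm => (d.1, d.2 - 1)
  | .spm => (d.1 + 1, d.2 - 1)
  | .smp => (d.1 - 1, d.2 + 1)

/-- The result of applying a sequence of elementary walls, innermost (rightmost) first. -/
def runW (d : ℤ × ℤ) (ws : List WStep) : ℤ × ℤ := ws.foldl applyW d

/-- All intermediate domains are genuine domains and the boundary walls `bp`, `tm` only
occur at the appropriate boundary. -/
def ValidFrom (m n : ℤ) : ℤ × ℤ → List WStep → Prop
  | _, [] => True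
  | d, w :: ws =>
      (w = .bp → d.1 = 0) ∧ (w = .tm → d.1 = m - n) ∧
      IsDomain m n (applyW d w) ∧ ValidFrom m n (applyW d w) ws

/-- `ws` is a normally ordered decomposition of the wall `(d₂, d₁)` into elementary walls:
read from left to right the walls are first `C`-type walls of a single sign, then boundary
walls of a single type, then `∗`-type walls of a single sign (so in application order,
starting from `d₁`, the `∗`-walls come first and the `C`-walls last). -/
def NormalDecomp (m n : ℤ) (d2 d1 : ℤ × ℤ) (ws : List WStep) : Prop :=
  (∃ (t u v : ℕ) (sT bT cT : WStep),
    (sT = .spm ∨ sT = .smp) ∧ (bT = .bp ∨ bT = .tm) ∧ (cT = .cm ∨ cT = .cp) ∧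
    ws = List.replicate t sT ++ List.replicate u bT ++ List.replicate v cT) ∧
  ValidFrom m n d1 ws ∧ runW d1 ws = d2

/-- The explicit normally ordered decomposition, by the four cases. -/
def explicitWS (m n : ℤ) (d2 d1 : ℤ × ℤ) : List WStep :=
  if d1.1 < d2.2 - d1.2 then
    List.replicate d1.1.toNat .smp
      ++ List.replicate (d2.2 - d1.2 - d1.1).toNat .bp
      ++ List.replicate d2.1.toNat .cp
  else if d1.1 + d1.2 ≤ d2.1 + d2.2 then
    (if d1.2 ≤ d2.2 then List.replicate (d2.2 - d1.2).toNat WStep.smp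
      else List.replicate (d1.2 - d2.2).toNat WStep.spm)
      ++ List.replicate (d2.1 + d2.2 - d1.1 - d1.2).toNat .cp
  else if d1.1 + d1.2 ≤ m - n + d2.2 then
    (if d1.2 ≤ d2.2 then List.replicate (d2.2 - d1.2).toNat WStep.smp
      else List.replicate (d1.2 - d2.2).toNat WStep.spm)
      ++ List.replicate (d1.1 + d1.2 - d2.1 - d2.2).toNat .cm
  else
    List.replicate (m - n - d1.1).toNat .spm
      ++ List.replicate (d1.1 + d1.2 - d2.2 - (m - n)).toNat .tm
      ++ List.replicate (m - n - d2.1).toNat .cm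

def vx : WStep → ℤ
  | .cm => -1 | .cp => 1 | .bp => 0 | .tm => 0 | .spm => 1 | .smp => -1

def vy : WStep → ℤ
  | .cm => 0 | .cp => 0 | .bp => 1 | .tm => -1 | .spm => -1 | .smp => 1

lemma runW_cons (d : ℤ × ℤ) (w : WStep) (l : List WStep) :
    runW d (w :: l) = runW (applyW d w) l := rfl

lemma runW_append (d : ℤ × ℤ) (l1 l2 : List WStep) :
    runW d (l1 ++ l2) = runW (runW d l1) l2 := List.foldl_append ..

lemma runW_replicate (k : ℕ) (d : ℤ × ℤ) (w : WStep) :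
    runW d (List.replicate k w) = (d.1 + k * vx w, d.2 + k * vy w) := by
  induction k generalizing d with
  | zero => simp [runW]
  | succ k ih =>
    rw [List.replicate_succ, runW_cons, ih]
    cases w <;> simp [applyW, vx, vy, Prod.ext_iff] <;> push_cast <;> omega

lemma validFrom_append (d : ℤ × ℤ) (l1 l2 : List WStep) :
    ValidFrom m n d (l1 ++ l2) ↔ ValidFrom m n d l1 ∧ ValidFrom m n (runW d l1) l2 := by
  induction l1 generalizing d with
  | nil => simp [ValidFrom, runW]
  | cons w l ih => simp [ValidFrom, ih, runW_cons]; tauto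

lemma isDomain_runW (hd : IsDomain m n d) (h : ValidFrom m n d ws) :
    IsDomain m n (runW d ws) := by
  induction ws generalizing d with
  | nil => exact hd
  | cons w l ih =>
    obtain ⟨-, -, h1, h2⟩ := h
    exact ih h1 h2





lemma validFrom_rep_cp {m n : ℤ} (k : ℕ) (d : ℤ × ℤ) (hd : IsDomain m n d)
    (h : d.1 + k ≤ m - n) : ValidFrom m n d (List.replicate k .cp) := by
  induction k generalizing d with
  | zero => trivial
  | succ k ih =>
    obtain ⟨h1, h2, h3, h4⟩ := hd
    push_cast at h
    rw [List.replicate_succ]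
    refine ⟨by simp, by simp, ⟨?_, ?_, ?_, ?_⟩, ih _ ⟨?_, ?_, ?_, ?_⟩ ?_⟩ <;>
      simp [applyW] <;> omega

lemma validFrom_rep_cm {m n : ℤ} (k : ℕ) (d : ℤ × ℤ) (hd : IsDomain m n d)
    (h : 0 ≤ d.1 - k) : ValidFrom m n d (List.replicate k .cm) := by
  induction k generalizing d with
  | zero => trivial
  | succ k ih =>
    obtain ⟨h1, h2, h3, h4⟩ := hd
    push_cast at h
    rw [List.replicate_succ]
    refine ⟨by simp, by simp, ⟨?_, ?_, ?_, ?_⟩, ih _ ⟨?_, ?_, ?_, ?_⟩ ?_⟩ <;>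
      simp [applyW] <;> omega

lemma validFrom_rep_smp {m n : ℤ} (k : ℕ) (d : ℤ × ℤ) (hd : IsDomain m n d)
    (h : 0 ≤ d.1 - k) (h' : d.2 + k ≤ n) : ValidFrom m n d (List.replicate k .smp) := by
  induction k generalizing d with
  | zero => trivial
  | succ k ih =>
    obtain ⟨h1, h2, h3, h4⟩ := hd
    push_cast at h h'
    rw [List.replicate_succ]
    refine ⟨by simp, by simp, ⟨?_, ?_, ?_, ?_⟩, ih _ ⟨?_, ?_, ?_, ?_⟩ ?_ ?_⟩ <;>
      simp [applyW] <;> omega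

lemma validFrom_rep_spm {m n : ℤ} (k : ℕ) (d : ℤ × ℤ) (hd : IsDomain m n d)
    (h : d.1 + k ≤ m - n) (h' : 0 ≤ d.2 - k) : ValidFrom m n d (List.replicate k .spm) := by
  induction k generalizing d with
  | zero => trivial
  | succ k ih =>
    obtain ⟨h1, h2, h3, h4⟩ := hd
    push_cast at h h'
    rw [List.replicate_succ]
    refine ⟨by simp, by simp, ⟨?_, ?_, ?_, ?_⟩, ih _ ⟨?_, ?_, ?_, ?_⟩ ?_ ?_⟩ <;>
      simp [applyW] <;> omega

lemma validFrom_rep_bp {m n : ℤ} (k : ℕ) (d : ℤ × ℤ) (hd : IsDomain m n d)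
    (h : d.1 = 0) (h' : d.2 + k ≤ n) : ValidFrom m n d (List.replicate k .bp) := by
  induction k generalizing d with
  | zero => trivial
  | succ k ih =>
    obtain ⟨h1, h2, h3, h4⟩ := hd
    push_cast at h'
    rw [List.replicate_succ]
    refine ⟨fun _ => h, by simp, ⟨?_, ?_, ?_, ?_⟩, ih _ ⟨?_, ?_, ?_, ?_⟩ ?_ ?_⟩ <;>
      simp [applyW] <;> omega

lemma validFrom_rep_tm {m n : ℤ} (k : ℕ) (d : ℤ × ℤ) (hd : IsDomain m n d)
    (h : d.1 = m - n) (h' : 0 ≤ d.2 - k) : ValidFrom m n d (List.replicate k .tm) := by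
  induction k generalizing d with
  | zero => trivial
  | succ k ih =>
    obtain ⟨h1, h2, h3, h4⟩ := hd
    push_cast at h'
    rw [List.replicate_succ]
    refine ⟨by simp, fun _ => h, ⟨?_, ?_, ?_, ?_⟩, ih _ ⟨?_, ?_, ?_, ?_⟩ ?_ ?_⟩ <;>
      simp [applyW] <;> omega

lemma rep_congr {a b : ℕ} {w w' : WStep} (hab : a = b) (h : a ≠ 0 → w = w') :
    List.replicate a w = List.replicate b w' := by
  subst hab
  rcases Nat.eq_zero_or_pos a with rfl | ha
  · rfl
  · rw [h (by omega)]

lemma blocks3 {t u v a b c : ℕ} {s B C s' B' C' : WStep} (ht : t = a) (hu : u = b) (hv : v = c)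
    (hs : t ≠ 0 → s = s') (hb : u ≠ 0 → B = B') (hc : v ≠ 0 → C = C') :
    List.replicate t s ++ List.replicate u B ++ List.replicate v C =
      List.replicate a s' ++ List.replicate b B' ++ List.replicate c C' := by
  rw [rep_congr ht hs, rep_congr hu hb, rep_congr hv hc]

lemma blocks2 {t u v a c : ℕ} {s B C s' C' : WStep} (ht : t = a) (hu : u = 0) (hv : v = c)
    (hs : t ≠ 0 → s = s') (hc : v ≠ 0 → C = C') :
    List.replicate t s ++ List.replicate u B ++ List.replicate v C =
      List.replicate a s' ++ List.replicate c C' := by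
  subst hu
  rw [rep_congr ht hs, rep_congr hv hc]
  simp





lemma explicit_normal (m n : ℤ) (hmn : n < m) (hn : 1 ≤ n)
    (d2 d1 : ℤ × ℤ) (hd2 : IsDomain m n d2) (hd1 : IsDomain m n d1) :
    NormalDecomp m n d2 d1 (explicitWS m n d2 d1) := by
  obtain ⟨x2, y2⟩ := d2
  obtain ⟨x1, y1⟩ := d1
  obtain ⟨p1, p2, p3, p4⟩ := hd2
  obtain ⟨q1, q2, q3, q4⟩ := hd1
  rw [NormalDecomp, explicitWS]
  simp only
  split_ifs with h1 h2 hs h3 hs3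
  · -- case 1
    refine ⟨⟨_, _, _, _, _, _, Or.inr rfl, Or.inl rfl, Or.inr rfl, rfl⟩, ?_, ?_⟩
    · simp only [validFrom_append, runW_append, runW_replicate, vx, vy]
      exact ⟨⟨validFrom_rep_smp _ _ ⟨q1, q2, q3, q4⟩ (by omega) (by omega),
        validFrom_rep_bp _ _ ⟨by omega, by omega, by omega, by omega⟩ (by omega) (by omega)⟩,
        validFrom_rep_cp _ _ ⟨by omega, by omega, by omega, by omega⟩ (by omega)⟩
    · simp only [runW_append, runW_replicate, vx, vy, Prod.mk.injEq]
      omega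
  · -- case 2, smp
    refine ⟨⟨(y2 - y1).toNat, 0, (x2 + y2 - x1 - y1).toNat, .smp, .bp, .cp, Or.inr rfl, Or.inl rfl, Or.inr rfl, by simp⟩, ?_, ?_⟩
    · simp only [validFrom_append, runW_append, runW_replicate, vx, vy]
      exact ⟨validFrom_rep_smp _ _ ⟨q1, q2, q3, q4⟩ (by omega) (by omega),
        validFrom_rep_cp _ _ ⟨by omega, by omega, by omega, by omega⟩ (by omega)⟩
    · simp only [runW_append, runW_replicate, vx, vy, Prod.mk.injEq]
      omega
  · -- case 2, spm
    refine ⟨⟨(y1 - y2).toNat, 0, (x2 + y2 - x1 - y1).toNat, .spm, .bp, .cp, Or.inl rfl, Or.inl rfl, Or.inr rfl, by simp⟩, ?_, ?_⟩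
    · simp only [validFrom_append, runW_append, runW_replicate, vx, vy]
      exact ⟨validFrom_rep_spm _ _ ⟨q1, q2, q3, q4⟩ (by omega) (by omega),
        validFrom_rep_cp _ _ ⟨by omega, by omega, by omega, by omega⟩ (by omega)⟩
    · simp only [runW_append, runW_replicate, vx, vy, Prod.mk.injEq]
      omega
  · -- case 3, smp
    refine ⟨⟨(y2 - y1).toNat, 0, (x1 + y1 - x2 - y2).toNat, .smp, .bp, .cm, Or.inr rfl, Or.inl rfl, Or.inl rfl, by simp⟩, ?_, ?_⟩
    · simp only [validFrom_append, runW_append, runW_replicate, vx, vy]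
      exact ⟨validFrom_rep_smp _ _ ⟨q1, q2, q3, q4⟩ (by omega) (by omega),
        validFrom_rep_cm _ _ ⟨by omega, by omega, by omega, by omega⟩ (by omega)⟩
    · simp only [runW_append, runW_replicate, vx, vy, Prod.mk.injEq]
      omega
  · -- case 3, spm
    refine ⟨⟨(y1 - y2).toNat, 0, (x1 + y1 - x2 - y2).toNat, .spm, .bp, .cm, Or.inl rfl, Or.inl rfl, Or.inl rfl, by simp⟩, ?_, ?_⟩
    · simp only [validFrom_append, runW_append, runW_replicate, vx, vy]
      exact ⟨validFrom_rep_spm _ _ ⟨q1, q2, q3, q4⟩ (by omega) (by omega),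
        validFrom_rep_cm _ _ ⟨by omega, by omega, by omega, by omega⟩ (by omega)⟩
    · simp only [runW_append, runW_replicate, vx, vy, Prod.mk.injEq]
      omega
  · -- case 4
    refine ⟨⟨_, _, _, _, _, _, Or.inl rfl, Or.inr rfl, Or.inl rfl, rfl⟩, ?_, ?_⟩
    · simp only [validFrom_append, runW_append, runW_replicate, vx, vy]
      exact ⟨⟨validFrom_rep_spm _ _ ⟨q1, q2, q3, q4⟩ (by omega) (by omega),
        validFrom_rep_tm _ _ ⟨by omega, by omega, by omega, by omega⟩ (by omega) (by omega)⟩,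
        validFrom_rep_cm _ _ ⟨by omega, by omega, by omega, by omega⟩ (by omega)⟩
    · simp only [runW_append, runW_replicate, vx, vy, Prod.mk.injEq]
      omega

lemma normal_eq (m n : ℤ) (hmn : n < m) (hn : 1 ≤ n)
    (d2 d1 : ℤ × ℤ) (hd2 : IsDomain m n d2) (hd1 : IsDomain m n d1)
    (ws : List WStep) (h : NormalDecomp m n d2 d1 ws) : ws = explicitWS m n d2 d1 := by
  obtain ⟨⟨t, u, v, sT, bT, cT, hsd, hbd, hcd, rfl⟩, hval, hrun⟩ := h
  obtain ⟨x2, y2⟩ := d2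
  obtain ⟨x1, y1⟩ := d1
  obtain ⟨p1, p2, p3, p4⟩ := hd2
  obtain ⟨q1, q2, q3, q4⟩ := hd1
  rcases hsd with rfl | rfl <;> rcases hbd with rfl | rfl <;> rcases hcd with rfl | rfl <;>
  · simp only [validFrom_append, runW_append, runW_replicate, vx, vy] at hval hrun
    obtain ⟨⟨hv1, hv2⟩, hv3⟩ := hval
    have Hp := isDomain_runW ⟨q1, q2, q3, q4⟩ hv1
    simp only [runW_replicate, vx, vy] at Hp
    obtain ⟨hp1, hp2, hp3, hp4⟩ := Hp
    have Hq := isDomain_runW ⟨hp1, hp2, hp3, hp4⟩ hv2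
    simp only [runW_replicate, vx, vy] at Hq
    obtain ⟨hq1, hq2, hq3, hq4⟩ := Hq
    rw [Prod.ext_iff] at hrun
    obtain ⟨hr1, hr2⟩ := hrun
    simp only at hr1 hr2
    rcases Nat.eq_zero_or_pos u with hu | hu
    · simp only [explicitWS]
      split_ifs <;>
        first
        | (exfalso; omega)
        | (refine blocks3 ?_ ?_ ?_ ?_ ?_ ?_ <;>
            first | omega | (intro hx; first | rfl | (exfalso; omega)))
        | (refine blocks2 ?_ ?_ ?_ ?_ ?_ <;>
            first | omega | (intro hx; first | rfl | (exfalso; omega)))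
    · obtain ⟨u', rfl⟩ : ∃ u', u = u' + 1 := ⟨u - 1, by omega⟩
      rw [List.replicate_succ] at hv2
      simp only [ValidFrom] at hv2
      obtain ⟨hB1, hB2, -, -⟩ := hv2
      first | have hbb := hB1 trivial | have hbb := hB1 rfl | skip
      first | have hbt := hB2 trivial | have hbt := hB2 rfl | skip
      simp only [explicitWS]
      split_ifs <;>
        first
        | (exfalso; omega)
        | (refine blocks3 ?_ ?_ ?_ ?_ ?_ ?_ <;>
            first | omega | (intro hx; first | rfl | (exfalso; omega)))
        | (refine blocks2 ?_ ?_ ?_ ?_ ?_ <;>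
            first | omega | (intro hx; first | rfl | (exfalso; omega)))



theorem stmt14 (m n : ℤ) (hmn : n < m) (hn : 1 ≤ n)
    (d2 d1 : ℤ × ℤ) (hd2 : IsDomain m n d2) (hd1 : IsDomain m n d1) (hne : d2 ≠ d1) :
    (∃! ws : List WStep, NormalDecomp m n d2 d1 ws) ∧
    NormalDecomp m n d2 d1 (explicitWS m n d2 d1) := by
  exact ⟨⟨explicitWS m n d2 d1, explicit_normal m n hmn hn d2 d1 hd2 hd1,
    fun ws h => normal_eq m n hmn hn d2 d1 hd2 hd1 ws h⟩,
    explicit_normal m n hmn hn d2 d1 hd2 hd1⟩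

end Stmt14
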